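/- Let S be a string of length N represented by an SLP, and let q ≥ 2. Every substring of S of length q is a substring of t_i for some variable X_i → X_{ℓ(i)} X_{r(i)} with |val(X_i)| ≥ q, where t_i = suf(val(X_{ℓ(i)}), q−1) · pre(val(X_{r(i)}), q−1). -/

import Mathlib

/-- A straight line program (SLP): variables are indexed `0, 1, 2, …` (variable `i`
corresponds to `X_{i+1}` in 1-based notation); each rule is either a terminal character
or a concatenation of two variables with strictly smaller indices. The SLP has `n`
variables `0, …, n-1` and represents `val (n-1)`. -/
structure SLP (α : Type*) where
  n : ℕ
  rule : ℕ → α ⊕ (ℕ × ℕ)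
  valid : ∀ i l r, rule i = Sum.inr (l, r) → l < i ∧ r < i

/-- The string derived from variable `i` of the SLP. -/
def SLP.val {α : Type*} (P : SLP α) (i : ℕ) : List α :=
  match h : P.rule i with
  | Sum.inl a => [a]
  | Sum.inr (l, r) =>
    have _hv := P.valid i l r h
    P.val l ++ P.val r
termination_by i
decreasing_by
  · exact _hv.1
  · exact _hv.2

lemma SLP.val_inl {α : Type*} (P : SLP α) {i : ℕ} {a : α} (h : P.rule i = Sum.inl a) :
    P.val i = [a] := by
  rw [SLP.val]; split <;> simp_all

lemma SLP.val_inr {α : Type*} (P : SLP α) {i l r : ℕ} (h : P.rule i = Sum.inr (l, r)) :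
    P.val i = P.val l ++ P.val r := by
  rw [SLP.val]; split <;> simp_all

/-- An infix `sub` of `w.drop a` starting at the front is an infix of `w`. -/
lemma infix_of_drop_take {α : Type*} (w : List α) (a m : ℕ) :
    (w.drop a).take m <:+: w :=
  List.infix_iff_prefix_suffix.mpr ⟨w.drop a, List.take_prefix _ _, List.drop_suffix _ _⟩

/-- splitting lemma -/
lemma infix_split {α : Type*} (A B sub : List α) (q : ℕ) (hq : 1 ≤ q)
    (hl : sub.length = q) (h : sub <:+: A ++ B) :
    sub <:+: A ∨ sub <:+: B ∨
      sub <:+: (A.drop (A.length - (q - 1)) ++ B.take (q - 1)) := by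
  obtain ⟨s, t, hst⟩ := h
  set a := s.length with ha
  have hw : a + q ≤ A.length + B.length := by
    have := congrArg List.length hst
    simp [List.length_append] at this
    omega
  have hsub : sub = ((A ++ B).drop a).take q := by
    rw [← hst, List.append_assoc, List.drop_left, ← hl, List.take_left]
  by_cases h1 : a + q ≤ A.length
  · left
    rw [hsub, List.drop_append_of_le_length (by omega),
      List.take_append_of_le_length (by simp [List.length_drop]; omega)]
    exact infix_of_drop_take A a q
  · by_cases h2 : A.length ≤ a
    · right; left
      have : a = A.length + (a - A.length) := by omega
      rw [hsub, this, ← List.drop_drop, List.drop_left]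
      exact infix_of_drop_take B _ q
    · right; right
      have hd : True := trivial
      have hdA : A.length - (q - 1) ≤ A.length := by omega
      have hda : A.length - (q - 1) ≤ a := by omega
      have hmin : q ≤ A.length + (q - 1) - ((A.length - (q - 1)) + (a - (A.length - (q - 1)))) := by omega
      have hT : A.drop (A.length - (q - 1)) ++ B.take (q - 1)
          = (((A ++ B).take (A.length + (q - 1))).drop (A.length - (q - 1))) := by
        rw [List.take_length_add_append, List.drop_append_of_le_length hdA]
      rw [hT]
      refine List.infix_iff_prefix_suffix.mpr
        ⟨(((A ++ B).take (A.length + (q - 1))).drop (A.length - (q - 1))).drop (a - (A.length - (q - 1))), ?_, ?_⟩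
      · rw [List.drop_drop, List.drop_take]
        have hsub' : sub = (((A ++ B).drop ((A.length - (q - 1)) + (a - (A.length - (q - 1))))).take (A.length + (q - 1) - ((A.length - (q - 1)) + (a - (A.length - (q - 1)))))).take q := by
          rw [List.take_take, min_eq_left hmin]
          rw [show (A.length - (q - 1)) + (a - (A.length - (q - 1))) = a from by omega, hsub]
        rw [hsub']
        exact List.take_prefix _ _
      · exact List.drop_suffix _ _

lemma slp_aux {α : Type*} (P : SLP α) (q : ℕ) (hq : 2 ≤ q) :
    ∀ i, ∀ sub : List α, sub.length = q → sub <:+: P.val i →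
      ∃ j ≤ i, ∃ l r, P.rule j = Sum.inr (l, r) ∧ q ≤ (P.val j).length ∧
        sub <:+: ((P.val l).drop ((P.val l).length - (q - 1)) ++ (P.val r).take (q - 1)) := by
  intro i
  induction i using Nat.strong_induction_on with
  | _ i ih =>
    intro sub hlen hinf
    cases hr : P.rule i with
    | inl a =>
      have := hinf.length_le
      rw [P.val_inl hr] at this
      simp at this; omega
    | inr lr =>
      obtain ⟨l, r⟩ := lr
      obtain ⟨hl, hrlt⟩ := P.valid i l r hr
      rw [P.val_inr hr] at hinf
      rcases infix_split _ _ _ q (by omega) hlen hinf with h | h | h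
      · obtain ⟨j, hj, rest⟩ := ih l hl sub hlen h
        exact ⟨j, by omega, rest⟩
      · obtain ⟨j, hj, rest⟩ := ih r hrlt sub hlen h
        exact ⟨j, by omega, rest⟩
      · refine ⟨i, le_refl i, l, r, hr, ?_, h⟩
        have := hinf.length_le
        rw [← P.val_inr hr] at this
        omega

/-- every length-`q` substring of the represented string `S` (with `q ≥ 2`)
is a substring of `t_i = suf(val l, q−1) ++ pre(val r, q−1)` for some variable `i < n`
with rule `X_i → X_l X_r` and `|val i| ≥ q`. -/
theorem slp_partial_decompression {α : Type*} (P : SLP α) (hn : 1 ≤ P.n)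
    (q : ℕ) (hq : 2 ≤ q) :
    ∀ sub : List α, sub.length = q → sub <:+: P.val (P.n - 1) →
      ∃ i < P.n, ∃ l r, P.rule i = Sum.inr (l, r) ∧ q ≤ (P.val i).length ∧
        sub <:+: ((P.val l).drop ((P.val l).length - (q - 1)) ++ (P.val r).take (q - 1)) := by
  intro sub hlen hinf
  obtain ⟨j, hj, rest⟩ := slp_aux P q hq (P.n - 1) sub hlen hinf
  exact ⟨j, by omega, rest⟩
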